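/- Let C be a type and let a : ℕ+ × C → ℤ be a function such that for every prime p and every positive integer u divisible by p and every c ∈ C, a(u, c) = p · a(p·u, c). Then a(t, c) = 0 for every t > 1 and every c ∈ C. -/

import Mathlib

theorem stmt_9 {C : Type*} (a : ℕ+ × C → ℤ)
    (h : ∀ p : ℕ+, (p : ℕ).Prime → ∀ u : ℕ+, (p : ℕ) ∣ (u : ℕ) → ∀ c : C,
      a (u, c) = (p : ℤ) * a (p * u, c)) :
    ∀ t : ℕ+, 1 < t → ∀ c : C, a (t, c) = 0 := by
  intro t ht c
  have htn : 1 < (t : ℕ) := ht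
  obtain ⟨p, hp, hpd⟩ := ((t : ℕ)).exists_prime_and_dvd (by omega)
  set P : ℕ+ := ⟨p, hp.pos⟩ with hP
  have key : ∀ k : ℕ, a (t, c) = (p : ℤ) ^ k * a (P ^ k * t, c) := by
    intro k
    induction k with
    | zero => simp
    | succ k ih =>
      rw [ih, h P hp (P ^ k * t) ?_ c]
      · have hPP : P * (P ^ k * t) = P ^ (k + 1) * t := by ring
        rw [hPP]
        rw [show ((P : ℕ) : ℤ) = (p : ℤ) from rfl]
        ring
      · show p ∣ (P ^ k * t : ℕ+)
        simp only [PNat.mul_coe, PNat.pow_coe]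
        exact Dvd.dvd.mul_left hpd _
  have hdvd : ∀ k : ℕ, (p : ℤ) ^ k ∣ a (t, c) := fun k => ⟨_, key k⟩
  by_contra hne
  obtain ⟨k, hk⟩ : ∃ k : ℕ, (a (t, c)).natAbs < p ^ k := by
    refine ⟨(a (t, c)).natAbs, Nat.lt_pow_self hp.one_lt⟩
  have h2 := Int.natAbs_dvd_natAbs.mpr (hdvd k)
  have h3 := Nat.le_of_dvd (by omega : 0 < (a (t, c)).natAbs) h2
  simp [Int.natAbs_pow] at h3
  omega
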